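/- Let c be an admissible coefficient function satisfying (Cubic values), (Normalization) and (Separation), and assume a_1 ≥ 2. If a_i = 2 for some i ∈ {1,2,3}, then c(4e_{i,1}, 0) = −1/96. -/

import Mathlib

/- Common framework: Frobenius manifolds for orbifold projective lines ℙ¹_A,
   following Ishibashi–Shiraishi–Takahashi. -/

namespace FrobeniusUniqueness

/-- A point index `(i, j)` labelling a flat coordinate `t_{i,j}`. -/
abbrev Pt : Type := Fin 3 × ℕ

/-- A non-negative element of `ℤ^{μ_A − 2}`: an exponent vector `α` with `α_{i,j} ∈ ℕ`. -/
abbrev Expv : Type := Pt →₀ ℕ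

/-- The standard basis vector `e_{i,j}`. -/
noncomputable def e (i : Fin 3) (j : ℕ) : Expv := Finsupp.single (i, j) 1

/-- The length `|α|` of an exponent vector. -/
def len (α : Expv) : ℕ := α.sum fun _ n => n

/-- A point index `(i,j)` is valid if `1 ≤ j ≤ a_i − 1`. -/
def ValidPt (A : Fin 3 → ℕ) (p : Pt) : Prop := 1 ≤ p.2 ∧ p.2 ≤ A p.1 - 1

/-- An exponent vector lies in `ℤ^{μ_A − 2}` iff it is supported on valid indices. -/
def Valid (A : Fin 3 → ℕ) (α : Expv) : Prop := ∀ p ∈ α.support, ValidPt A p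

/-- The combinatorial factor `s_{a,b,c}`. -/
def sFactor (a b c : ℕ) : ℂ :=
  if a = b ∧ b = c then 6
  else if a ≠ b ∧ b ≠ c ∧ a ≠ c then 1
  else 2

/-- The index type for the flat coordinates `t_1`, `t_{i,j}`, `t_{μ_A}`. -/
inductive Idx : Type where
  | one : Idx
  | pt : Fin 3 → ℕ → Idx
  | mu : Idx
deriving DecidableEq

/-- Validity of a flat coordinate index. -/
def ValidIdx (A : Fin 3 → ℕ) : Idx → Prop
  | .one => True
  | .pt i j => ValidPt A (i, j)
  | .mu => True

/-- The metric `η` in the frame `∂_1, ∂_{i,j}, ∂_{μ_A}`. -/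
noncomputable def eta (A : Fin 3 → ℕ) : Idx → Idx → ℂ
  | .one, .mu => 1
  | .mu, .one => 1
  | .pt i j, .pt i' j' =>
      if i = i' ∧ j + j' = A i ∧ 1 ≤ j ∧ j ≤ A i - 1 then (A i : ℂ)⁻¹ else 0
  | _, _ => 0

/-- The point indices occurring in an `Idx`. -/
def ptsOf : Idx → List Pt
  | .pt i j => [(i, j)]
  | _ => []

/-- The number of occurrences of `μ_A` in an `Idx`. -/
def muCount : Idx → ℕ
  | .mu => 1
  | _ => 0

/-- The factor produced when the monomial `t^{β + Σ_{p ∈ ps} e_p}` is differentiated by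
`∏_{p ∈ ps} ∂_p`, leaving the monomial `t^β`. -/
noncomputable def dfac (β : Expv) : List Pt → ℕ
  | [] => 1
  | p :: ps =>
      ((β + ((ps.map fun q => (Finsupp.single q 1 : Expv)).sum) + Finsupp.single p 1 : Expv) p)
        * dfac β ps

/-- `der A c a b d β m` is the coefficient of `t^β · e^{m·t_{μ_A}}` in `∂_a ∂_b ∂_d F`, where
`F = (1/2)t_1²t_{μ_A} + (1/2)t_1·Σ_{i,j}(1/a_i)t_{i,j}t_{i,a_i−j} + Σ_{α,m} c(α,m)t^α e^{m t_{μ_A}}`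
is the potential of the coefficient function `c`.  In particular `∂_1∂_a∂_b F = η(∂_a,∂_b)`. -/
noncomputable def der (A : Fin 3 → ℕ) (c : Expv → ℕ → ℂ) (a b d : Idx) (β : Expv) (m : ℕ) : ℂ :=
  if a = .one then (if β = 0 ∧ m = 0 then eta A b d else 0)
  else if b = .one then (if β = 0 ∧ m = 0 then eta A a d else 0)
  else if d = .one then (if β = 0 ∧ m = 0 then eta A a b else 0)
  else
    (m : ℂ) ^ (muCount a + muCount b + muCount d) *
      (dfac β (ptsOf a ++ ptsOf b ++ ptsOf d) : ℂ) *
      c (β + (((ptsOf a ++ ptsOf b ++ ptsOf d).map fun q => (Finsupp.single q 1 : Expv)).sum)) m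

/-- The coefficient of `t^β · e^{m·t_{μ_A}}` in
`Σ_{σ,τ} ∂_a∂_b∂_σF · η^{στ} · ∂_τ∂_d∂_e F`, where `(η^{στ})` is the inverse matrix of
`(η_{στ})` (so the only nonzero entries are `η^{1,μ_A} = η^{μ_A,1} = 1` and
`η^{(i,j),(i,a_i−j)} = a_i`). -/
noncomputable def quadTerm (A : Fin 3 → ℕ) (c : Expv → ℕ → ℂ) (a b d e' : Idx)
    (β : Expv) (m : ℕ) : ℂ :=
  ∑ x ∈ Finset.HasAntidiagonal.antidiagonal β, ∑ y ∈ Finset.HasAntidiagonal.antidiagonal m,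
    (der A c a b .one x.1 y.1 * der A c .mu d e' x.2 y.2
     + der A c a b .mu x.1 y.1 * der A c .one d e' x.2 y.2
     + ∑ i : Fin 3, ∑ j ∈ Finset.Icc 1 (A i - 1),
         (A i : ℂ) * der A c a b (.pt i j) x.1 y.1 * der A c (.pt i (A i - j)) d e' x.2 y.2)

/-- `χ_A = 1/a_1 + 1/a_2 + 1/a_3 − 1`. -/
noncomputable def chi (A : Fin 3 → ℕ) : ℚ := (A 0 : ℚ)⁻¹ + (A 1 : ℚ)⁻¹ + (A 2 : ℚ)⁻¹ - 1

/-- The degree of the monomial `t^α`: `Σ_{i,j} α_{i,j}·(a_i − j)/a_i`. -/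
noncomputable def deg (A : Fin 3 → ℕ) (α : Expv) : ℚ :=
  α.sum fun p n => (n : ℚ) * (((A p.1 : ℚ) - (p.2 : ℚ)) / (A p.1 : ℚ))

/-- A coefficient function is admissible if it satisfies (Homogeneity) and the WDVV
equations (coefficientwise, in the variables `t_{i,j}` and `e^{t_{μ_A}}`). -/
structure IsAdmissible (A : Fin 3 → ℕ) (c : Expv → ℕ → ℂ) : Prop where
  homog : ∀ α : Expv, Valid A α → ∀ m : ℕ, c α m ≠ 0 → deg A α + (m : ℚ) * chi A = 2
  wdvv : ∀ a b d e' : Idx, ValidIdx A a → ValidIdx A b → ValidIdx A d → ValidIdx A e' →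
      ∀ β : Expv, Valid A β → ∀ m : ℕ,
        quadTerm A c a b d e' β m = quadTerm A c a d b e' β m

/-- (Cubic values). -/
def CubicValues (A : Fin 3 → ℕ) (c : Expv → ℕ → ℂ) : Prop :=
  (∀ (i₁ i₂ i₃ : Fin 3) (j₁ j₂ j₃ : ℕ),
      ValidPt A (i₁, j₁) → ValidPt A (i₂, j₂) → ValidPt A (i₃, j₃) →
      ¬(i₁ = i₂ ∧ i₂ = i₃) → c (e i₁ j₁ + e i₂ j₂ + e i₃ j₃) 0 = 0) ∧
  (∀ (i : Fin 3) (j₁ j₂ j₃ : ℕ),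
      ValidPt A (i, j₁) → ValidPt A (i, j₂) → ValidPt A (i, j₃) →
      sFactor j₁ j₂ j₃ * c (e i j₁ + e i j₂ + e i j₃) 0 =
        if j₁ + j₂ + j₃ = A i then (A i : ℂ)⁻¹ else 0)

/-- (Normalization). -/
def Normalization (A : Fin 3 → ℕ) (c : Expv → ℕ → ℂ) : Prop :=
  (2 ≤ A 0 → c (e 0 1 + e 1 1 + e 2 1) 1 = 1) ∧
  (A 0 = 1 → A 0 < A 1 → c (e 1 1 + e 2 1) 1 = 1) ∧
  (A 0 = 1 → A 1 = 1 → A 1 < A 2 → c (e 2 1) 1 = 1) ∧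
  (A 0 = 1 → A 1 = 1 → A 2 = 1 → c 0 1 = 1)

/-- (Separation). -/
def Separation (A : Fin 3 → ℕ) (c : Expv → ℕ → ℂ) : Prop :=
  ∀ γ : Expv, Valid A γ →
    ∀ (i₁ i₂ : Fin 3) (j₁ j₂ : ℕ), i₁ ≠ i₂ → ValidPt A (i₁, j₁) → ValidPt A (i₂, j₂) →
      e i₁ j₁ + e i₂ j₂ ≤ γ → c γ 0 = 0

/-- The automorphism of `ℤ^{μ_A−2}` exchanging `e_{i₁,j}` and `e_{i₂,j}` for all `j`. -/
def swapExp (i₁ i₂ : Fin 3) (α : Expv) : Expv :=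
  Finsupp.equivMapDomain ((Equiv.swap i₁ i₂).prodCongr (Equiv.refl ℕ)) α

/-- (Symmetry). -/
def Symmetry (A : Fin 3 → ℕ) (c : Expv → ℕ → ℂ) : Prop :=
  ∀ i₁ i₂ : Fin 3, A i₁ = A i₂ → ∀ α : Expv, Valid A α → ∀ m : ℕ,
    c (swapExp i₁ i₂ α) m = c α m



section Helpers
variable {A : Fin 3 → ℕ} {c : Expv → ℕ → ℂ}

lemma validPt_one (hA2 : ∀ k, 2 ≤ A k) (k : Fin 3) : ValidPt A (k, 1) :=
  ⟨le_refl 1, by have := hA2 k; simp only [ValidPt]; omega⟩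

lemma valid_zero : Valid A 0 := by intro r hr; simp at hr

lemma valid_add {α β : Expv} (hα : Valid A α) (hβ : Valid A β) :
    Valid A (α + β) := by
  intro r hr
  rcases Finset.mem_union.mp (Finsupp.support_add hr) with h | h
  · exact hα r h
  · exact hβ r h

lemma valid_single {pt : Pt} (h : ValidPt A pt) (n : ℕ) :
    Valid A (Finsupp.single pt n) := by
  intro r hr
  have := Finsupp.support_single_subset hr
  simp only [Finset.mem_singleton] at this
  subst this; exact h

lemma sep_apply (hsep : Separation A c)
    {γ : Expv} (hγ : Valid A γ) {k₁ k₂ : Fin 3} {j₁ j₂ : ℕ} (hk : k₁ ≠ k₂)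
    (h1 : ValidPt A (k₁, j₁)) (h2 : ValidPt A (k₂, j₂))
    (hγ1 : 1 ≤ γ (k₁, j₁)) (hγ2 : 1 ≤ γ (k₂, j₂)) : c γ 0 = 0 := by
  refine hsep γ hγ k₁ k₂ j₁ j₂ hk h1 h2 ?_
  rw [Finsupp.le_def]
  intro s
  have hne : ((k₁, j₁) : Pt) ≠ (k₂, j₂) := by simp [hk]
  rcases eq_or_ne s ((k₁, j₁) : Pt) with rfl | h1'
  · simpa [e, Finsupp.single_apply, hk, Ne.symm hk] using hγ1
  rcases eq_or_ne s ((k₂, j₂) : Pt) with rfl | h2'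
  · simpa [e, Finsupp.single_apply, hk, Ne.symm hk] using hγ2
  · simp [e, Finsupp.single_apply, Ne.symm h1', Ne.symm h2']

lemma cubic_three (hcub : CubicValues A c) (hA2 : ∀ k, 2 ≤ A k)
    {i : Fin 3} (hi : A i = 2) : c (e i 1 + e i 1 + e i 1) 0 = 0 := by
  have h := hcub.2 i 1 1 1 (validPt_one hA2 i) (validPt_one hA2 i) (validPt_one hA2 i)
  rw [if_neg (by omega)] at h
  simpa [sFactor] using h


lemma der_pt_zero (hsep : Separation A c) {k₁ k₂ k₃ : Fin 3} {l₁ l₂ l₃ : ℕ} {β : Expv}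
    (hβ : Valid A β) (v₁ : ValidPt A (k₁,l₁)) (v₂ : ValidPt A (k₂,l₂)) (v₃ : ValidPt A (k₃,l₃))
    (hne : k₁ ≠ k₂ ∨ k₁ ≠ k₃ ∨ k₂ ≠ k₃) :
    der A c (.pt k₁ l₁) (.pt k₂ l₂) (.pt k₃ l₃) β 0 = 0 := by
  simp only [der, muCount, ptsOf, List.cons_append, List.nil_append, List.map_cons,
    List.map_nil, List.sum_cons, List.sum_nil, reduceCtorEq, if_false, pow_zero, one_mul,
    mul_eq_zero]
  right
  set γ : Expv := β + (Finsupp.single (k₁,l₁) 1 + (Finsupp.single (k₂,l₂) 1 +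
      (Finsupp.single (k₃,l₃) 1 + 0))) with hγdef
  have hval : Valid A γ :=
    valid_add hβ (valid_add (valid_single v₁ 1) (valid_add (valid_single v₂ 1)
      (valid_add (valid_single v₃ 1) valid_zero)))
  have b₁ : 1 ≤ γ (k₁, l₁) := by
    rw [hγdef]
    simp only [Finsupp.add_apply, Finsupp.single_apply, Finsupp.coe_zero, Pi.zero_apply]
    split_ifs <;> omega
  have b₂ : 1 ≤ γ (k₂, l₂) := by
    rw [hγdef]
    simp only [Finsupp.add_apply, Finsupp.single_apply, Finsupp.coe_zero, Pi.zero_apply]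
    split_ifs <;> omega
  have b₃ : 1 ≤ γ (k₃, l₃) := by
    rw [hγdef]
    simp only [Finsupp.add_apply, Finsupp.single_apply, Finsupp.coe_zero, Pi.zero_apply]
    split_ifs <;> omega
  rcases hne with h | h | h
  · exact sep_apply hsep hval h v₁ v₂ b₁ b₂
  · exact sep_apply hsep hval h v₁ v₃ b₁ b₃
  · exact sep_apply hsep hval h v₂ v₃ b₂ b₃

lemma der_cubic_zero (hcub : CubicValues A c) (hA2 : ∀ k, 2 ≤ A k) {i : Fin 3} (hi : A i = 2) :
    der A c (.pt i 1) (.pt i 1) (.pt i 1) 0 0 = 0 := by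
  have h := cubic_three hcub hA2 hi
  simp only [e] at h
  rw [add_assoc] at h
  simp [der, muCount, ptsOf, h]

end Helpers


lemma key (A : Fin 3 → ℕ) (hA2 : ∀ k, 2 ≤ A k) (c : Expv → ℕ → ℂ)
    (hadm : IsAdmissible A c) (hcub : CubicValues A c)
    (hn : c (e 0 1 + e 1 1 + e 2 1) 1 = 1) (hsep : Separation A c)
    (i p q : Fin 3) (hip : i ≠ p) (hiq : i ≠ q) (hpq : p ≠ q)
    (hi : A i = 2)
    (hsum : e i 1 + e p 1 + e q 1 = e 0 1 + e 1 1 + e 2 1) :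
    c (4 • e i 1) 0 = -(1/96) := by
  have vi := validPt_one hA2 i
  have vp := validPt_one hA2 p
  have vq := validPt_one hA2 q
  have hβ : Valid A (e i 1) := valid_single vi 1
  have H := hadm.wdvv (.pt i 1) (.pt i 1) (.pt p 1) (.pt q 1) vi vi vp vq (e i 1) hβ 1
  simp only [quadTerm, e, Finsupp.antidiagonal_single, Finset.sum_map,
    show Finset.HasAntidiagonal.antidiagonal (1:ℕ) = {(0,1),(1,0)} from rfl,
    Finset.sum_pair (by decide : ((0:ℕ),(1:ℕ)) ≠ (1,0)),
    Function.Embedding.coe_prodMap, Function.Embedding.coeFn_mk, Prod.map_apply,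
    Finsupp.single_zero] at H
  have S1 : (∑ x : Fin 3, ∑ x_1 ∈ Finset.Icc 1 (A x - 1),
      (A x : ℂ) * der A c (.pt i 1) (.pt i 1) (.pt x x_1) 0 0 *
      der A c (.pt x (A x - x_1)) (.pt p 1) (.pt q 1) (Finsupp.single (i,1) 1) 1) = 0 := by
    refine Finset.sum_eq_zero fun k _ => Finset.sum_eq_zero fun j hj => ?_
    rw [Finset.mem_Icc] at hj
    have h2k := hA2 k
    have vkj : ValidPt A (k, j) := ⟨hj.1, hj.2⟩
    rcases eq_or_ne k i with rfl | hk
    · have hj1 : j = 1 := by rw [hi] at hj; omega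
      subst hj1
      rw [der_cubic_zero hcub hA2 hi]
      ring
    · rw [der_pt_zero hsep valid_zero vi vi vkj (Or.inr (Or.inl (Ne.symm hk)))]
      ring
  have S2 : (∑ x : Fin 3, ∑ x_1 ∈ Finset.Icc 1 (A x - 1),
      (A x : ℂ) * der A c (.pt i 1) (.pt i 1) (.pt x x_1) 0 1 *
      der A c (.pt x (A x - x_1)) (.pt p 1) (.pt q 1) (Finsupp.single (i,1) 1) 0) = 0 := by
    refine Finset.sum_eq_zero fun k _ => Finset.sum_eq_zero fun j hj => ?_
    rw [Finset.mem_Icc] at hj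
    have h2k := hA2 k
    have vkj : ValidPt A (k, j) := ⟨hj.1, hj.2⟩
    have vkj' : ValidPt A (k, A k - j) := by constructor <;> dsimp only <;> omega
    rw [der_pt_zero hsep (valid_single vi 1) vkj' vp vq (Or.inr (Or.inr hpq))]
    ring
  have S3 : (∑ x : Fin 3, ∑ x_1 ∈ Finset.Icc 1 (A x - 1),
      (A x : ℂ) * der A c (.pt i 1) (.pt i 1) (.pt x x_1) (Finsupp.single (i,1) 1) 0 *
      der A c (.pt x (A x - x_1)) (.pt p 1) (.pt q 1) 0 1) = 48 * c (4 • e i 1) 0 := by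
    have hrest : ∀ b ∈ (Finset.univ : Finset (Fin 3)), b ≠ i →
        (∑ x_1 ∈ Finset.Icc 1 (A b - 1),
          (A b : ℂ) * der A c (.pt i 1) (.pt i 1) (.pt b x_1) (Finsupp.single (i,1) 1) 0 *
          der A c (.pt b (A b - x_1)) (.pt p 1) (.pt q 1) 0 1) = 0 := by
      intro k _ hk
      refine Finset.sum_eq_zero fun j hj => ?_
      rw [Finset.mem_Icc] at hj
      have vkj : ValidPt A (k, j) := ⟨hj.1, hj.2⟩
      rw [der_pt_zero hsep (valid_single vi 1) vi vi vkj (Or.inr (Or.inl (Ne.symm hk)))]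
      ring
    rw [Finset.sum_eq_single_of_mem i (Finset.mem_univ i) hrest, hi,
      show Finset.Icc 1 (2-1) = {1} from rfl, Finset.sum_singleton]
    have hd1 : der A c (.pt i 1) (.pt i 1) (.pt i 1) (Finsupp.single (i,1) 1) 0 =
        24 * c (4 • e i 1) 0 := by
      rw [show (4 • e i 1 : Expv) = Finsupp.single (i,1) 4 by
        simp [e, Finsupp.smul_single]]
      simp [der, muCount, ptsOf, dfac, Finsupp.add_apply, Finsupp.single_apply,
        ← Finsupp.single_add]
    have hd2 : der A c (.pt i (2-1)) (.pt p 1) (.pt q 1) 0 1 = 1 := by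
      have hn' : c (e i 1 + e p 1 + e q 1) 1 = 1 := by rw [hsum]; exact hn
      have hn'' : c (Finsupp.single ((i : Fin 3),(1:ℕ)) 1 + (Finsupp.single (p,1) 1 +
          Finsupp.single (q,1) 1)) 1 = 1 := by simpa [e, add_assoc] using hn'
      simp [der, muCount, ptsOf, dfac, Finsupp.add_apply, Finsupp.single_apply,
        hip, hiq, hpq, Ne.symm hip, Ne.symm hiq, Ne.symm hpq, hn'']
    rw [hd1, hd2]
    push_cast
    ring
  have S4 : (∑ x : Fin 3, ∑ x_1 ∈ Finset.Icc 1 (A x - 1),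
      (A x : ℂ) * der A c (.pt i 1) (.pt i 1) (.pt x x_1) (Finsupp.single (i,1) 1) 1 *
      der A c (.pt x (A x - x_1)) (.pt p 1) (.pt q 1) 0 0) = 0 := by
    refine Finset.sum_eq_zero fun k _ => Finset.sum_eq_zero fun j hj => ?_
    rw [Finset.mem_Icc] at hj
    have h2k := hA2 k
    have vkj : ValidPt A (k, j) := ⟨hj.1, hj.2⟩
    have vkj' : ValidPt A (k, A k - j) := by constructor <;> dsimp only <;> omega
    rw [der_pt_zero hsep valid_zero vkj' vp vq (Or.inr (Or.inr hpq))]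
    ring
  have R1 : (∑ x : Fin 3, ∑ x_1 ∈ Finset.Icc 1 (A x - 1),
      (A x : ℂ) * der A c (.pt i 1) (.pt p 1) (.pt x x_1) 0 0 *
      der A c (.pt x (A x - x_1)) (.pt i 1) (.pt q 1) (Finsupp.single (i,1) 1) 1) = 0 := by
    refine Finset.sum_eq_zero fun k _ => Finset.sum_eq_zero fun j hj => ?_
    rw [Finset.mem_Icc] at hj
    have h2k := hA2 k
    have vkj : ValidPt A (k, j) := ⟨hj.1, hj.2⟩
    have vkj' : ValidPt A (k, A k - j) := by constructor <;> dsimp only <;> omega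
    rw [der_pt_zero hsep valid_zero vi vp vkj (Or.inl hip)]
    ring
  have R2 : (∑ x : Fin 3, ∑ x_1 ∈ Finset.Icc 1 (A x - 1),
      (A x : ℂ) * der A c (.pt i 1) (.pt p 1) (.pt x x_1) 0 1 *
      der A c (.pt x (A x - x_1)) (.pt i 1) (.pt q 1) (Finsupp.single (i,1) 1) 0) = 0 := by
    refine Finset.sum_eq_zero fun k _ => Finset.sum_eq_zero fun j hj => ?_
    rw [Finset.mem_Icc] at hj
    have h2k := hA2 k
    have vkj : ValidPt A (k, j) := ⟨hj.1, hj.2⟩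
    have vkj' : ValidPt A (k, A k - j) := by constructor <;> dsimp only <;> omega
    rw [der_pt_zero hsep (valid_single vi 1) vkj' vi vq (Or.inr (Or.inr hiq))]
    ring
  have R3 : (∑ x : Fin 3, ∑ x_1 ∈ Finset.Icc 1 (A x - 1),
      (A x : ℂ) * der A c (.pt i 1) (.pt p 1) (.pt x x_1) (Finsupp.single (i,1) 1) 0 *
      der A c (.pt x (A x - x_1)) (.pt i 1) (.pt q 1) 0 1) = 0 := by
    refine Finset.sum_eq_zero fun k _ => Finset.sum_eq_zero fun j hj => ?_
    rw [Finset.mem_Icc] at hj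
    have h2k := hA2 k
    have vkj : ValidPt A (k, j) := ⟨hj.1, hj.2⟩
    have vkj' : ValidPt A (k, A k - j) := by constructor <;> dsimp only <;> omega
    rw [der_pt_zero hsep (valid_single vi 1) vi vp vkj (Or.inl hip)]
    ring
  have R4 : (∑ x : Fin 3, ∑ x_1 ∈ Finset.Icc 1 (A x - 1),
      (A x : ℂ) * der A c (.pt i 1) (.pt p 1) (.pt x x_1) (Finsupp.single (i,1) 1) 1 *
      der A c (.pt x (A x - x_1)) (.pt i 1) (.pt q 1) 0 0) = 0 := by
    refine Finset.sum_eq_zero fun k _ => Finset.sum_eq_zero fun j hj => ?_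
    rw [Finset.mem_Icc] at hj
    have h2k := hA2 k
    have vkj : ValidPt A (k, j) := ⟨hj.1, hj.2⟩
    have vkj' : ValidPt A (k, A k - j) := by constructor <;> dsimp only <;> omega
    rw [der_pt_zero hsep valid_zero vkj' vi vq (Or.inr (Or.inr hiq))]
    ring
  rw [S1, S2, S3, S4, R1, R2, R3, R4] at H
  have hn' : c (e i 1 + e p 1 + e q 1) 1 = 1 := by rw [hsum]; exact hn
  have hn'' : c (Finsupp.single ((i : Fin 3),(1:ℕ)) 1 + (Finsupp.single (p,1) 1 +
      Finsupp.single (q,1) 1)) 1 = 1 := by simpa [e, add_assoc] using hn'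
  simp [der, muCount, ptsOf, dfac, eta, hi, hip, hiq, hpq, Ne.symm hip, Ne.symm hiq,
    Ne.symm hpq, Finsupp.add_apply, Finsupp.single_apply, hn''] at H
  linear_combination H / 48

/-- Corollary 3.11. -/
theorem coefficient_of_fourth_power (A : Fin 3 → ℕ) (hA : ∀ i, 1 ≤ A i) (hA01 : A 0 ≤ A 1) (hA12 : A 1 ≤ A 2)
    (c : Expv → ℕ → ℂ) (hadm : IsAdmissible A c) (hcub : CubicValues A c)
    (hnorm : Normalization A c) (hsep : Separation A c)
    (ha₁ : 2 ≤ A 0) (i : Fin 3) (hi : A i = 2) :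
    c (4 • e i 1) 0 = -(1 / 96) := by
  have hA2 : ∀ k : Fin 3, 2 ≤ A k := by
    intro k
    fin_cases k
    · exact ha₁
    · exact le_trans ha₁ hA01
    · exact le_trans (le_trans ha₁ hA01) hA12
  have hn : c (e 0 1 + e 1 1 + e 2 1) 1 = 1 := hnorm.1 ha₁
  fin_cases i
  · exact key A hA2 c hadm hcub hn hsep 0 1 2 (by decide) (by decide) (by decide) hi rfl
  · exact key A hA2 c hadm hcub hn hsep 1 0 2 (by decide) (by decide) (by decide) hi
      (by rw [add_comm (e 1 1) (e 0 1)])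
  · exact key A hA2 c hadm hcub hn hsep 2 0 1 (by decide) (by decide) (by decide) hi
      (by rw [add_comm (e 2 1) (e 0 1) , add_assoc, add_comm (e 2 1) (e 1 1), ← add_assoc])

end FrobeniusUniqueness
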